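/- Variance bound for hinge loss under Tsybakov-type noise: if μ{|η₊ - η₋| ≤ t} ≤ C* t^q for all t > 0 (q ∈ (0,∞), C* > 0), then for every measurable f: X² → [-1,1], ∫ |f - f*|² dμ ≤ 2∫|f - f*| dμ ≤ V · (∫ |f - f*|·|η₊ - η₋| dμ)^{q/(q+1)}, where f* = sgn(η₊ - η₋) and V = 2^{(q+2)/(q+1)} C*^{1/(q+1)} q^{1/(q+1)} (1 + 1/q). -/

import Mathlib

open MeasureTheory

private lemma measurable_realSign : Measurable Real.sign := by
  have h : Real.sign = fun x : ℝ => if x < 0 then (-1 : ℝ) else if 0 < x then 1 else 0 := by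
    funext x; rfl
  rw [h]
  exact Measurable.ite (measurableSet_lt measurable_id measurable_const) measurable_const
    (Measurable.ite (measurableSet_lt measurable_const measurable_id) measurable_const
      measurable_const)

private lemma sign_abs_le (x : ℝ) : |Real.sign x| ≤ 1 := by
  rcases lt_trichotomy x 0 with h | h | h
  · rw [Real.sign_of_neg h]; norm_num
  · rw [h, Real.sign_zero]; norm_num
  · rw [Real.sign_of_pos h]; norm_num

private lemma rpow_opt (Cs q A : ℝ) (hCs : 0 < Cs) (hq : 0 < q) (hA : 0 < A) :
    2 * (2 * (Cs * ((A / (2 * q * Cs)) ^ ((1 : ℝ) / (q + 1))) ^ q)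
        + A / (A / (2 * q * Cs)) ^ ((1 : ℝ) / (q + 1)))
      = (2 ^ ((q + 2) / (q + 1)) * Cs ^ ((1 : ℝ) / (q + 1)) * q ^ ((1 : ℝ) / (q + 1))
          * (1 + 1 / q)) * A ^ (q / (q + 1)) := by
  have hq1 : (0 : ℝ) < q + 1 := by linarith
  set B := 2 * q * Cs with hBdef
  have hB : 0 < B := by positivity
  set s : ℝ := (1 : ℝ) / (q + 1) with hs
  set r : ℝ := q / (q + 1) with hr
  have hrs : r + s = 1 := by rw [hr, hs]; field_simp
  have hAr : 0 < A ^ r := Real.rpow_pos_of_pos hA r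
  have hAs : 0 < A ^ s := Real.rpow_pos_of_pos hA s
  have hBr : 0 < B ^ r := Real.rpow_pos_of_pos hB r
  have hBs : 0 < B ^ s := Real.rpow_pos_of_pos hB s
  have hAsplit : A = A ^ r * A ^ s := by
    rw [← Real.rpow_add hA, hrs, Real.rpow_one]
  have hBsplit : B = B ^ r * B ^ s := by
    rw [← Real.rpow_add hB, hrs, Real.rpow_one]
  have ht : (A / B) ^ s = A ^ s / B ^ s := Real.div_rpow hA.le hB.le s
  have htq : ((A / B) ^ s) ^ q = A ^ r / B ^ r := by
    rw [← Real.rpow_mul (by positivity : (0 : ℝ) ≤ A / B),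
      show s * q = r by rw [hs, hr]; ring]
    exact Real.div_rpow hA.le hB.le r
  have hAt : A / (A / B) ^ s = A ^ r * B ^ s := by
    rw [ht, div_div_eq_mul_div, div_eq_iff hAs.ne', mul_right_comm, ← hAsplit]
  have hBB : B ^ r * B ^ s = 2 * q * Cs := by rw [← hBsplit, hBdef]
  have hterm1 : 2 * (Cs * ((A / B) ^ s) ^ q) = (1 / q) * (A ^ r * B ^ s) := by
    rw [htq]
    have e1 : (1 : ℝ) / q * (A ^ r * B ^ s) = A ^ r * B ^ s / q := by ring
    have e2 : 2 * (Cs * (A ^ r / B ^ r)) = 2 * Cs * A ^ r / B ^ r := by ring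
    rw [e1, e2, div_eq_div_iff hBr.ne' hq.ne']
    linear_combination (-(A ^ r)) * hBB
  have hV : (2 : ℝ) ^ ((q + 2) / (q + 1)) * Cs ^ s * q ^ s = 2 * B ^ s := by
    have h2 : (q + 2) / (q + 1) = 1 + s := by rw [hs]; field_simp; ring
    rw [h2, Real.rpow_add two_pos, Real.rpow_one, hBdef,
      Real.mul_rpow (by positivity) hCs.le, Real.mul_rpow (by positivity) hq.le]
    ring
  calc 2 * (2 * (Cs * ((A / B) ^ s) ^ q) + A / (A / B) ^ s)
      = 2 * ((1 / q) * (A ^ r * B ^ s) + A ^ r * B ^ s) := by rw [hterm1, hAt]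
    _ = (2 * B ^ s * (1 + 1 / q)) * A ^ r := by field_simp; try ring
    _ = _ := by rw [← hV]; try ring

private lemma hinge_aux {α : Type*} [MeasurableSpace α] (μ : Measure α) [IsProbabilityMeasure μ]
    (g w : α → ℝ) (hgmeas : Measurable g) (hwmeas : Measurable w)
    (hg0 : ∀ z, 0 ≤ g z) (hg2 : ∀ z, g z ≤ 2)
    (hw0 : ∀ z, 0 ≤ w z) (hw2 : ∀ z, w z ≤ 2)
    (Cs q : ℝ) (hCs : 0 < Cs) (hq : 0 < q)
    (hnoise : ∀ t > 0, μ {z | w z ≤ t} ≤ ENNReal.ofReal (Cs * t ^ q)) :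
    2 * ∫ z, g z ∂μ
      ≤ (2 ^ ((q + 2) / (q + 1)) * Cs ^ ((1 : ℝ) / (q + 1)) * q ^ ((1 : ℝ) / (q + 1))
          * (1 + 1 / q)) * (∫ z, g z * w z ∂μ) ^ (q / (q + 1)) := by
  have hq1 : (0 : ℝ) < q + 1 := by linarith
  have hgint : Integrable g μ := by
    refine (integrable_const (2 : ℝ)).mono' hgmeas.aestronglyMeasurable ?_
    filter_upwards with z
    rw [Real.norm_eq_abs, abs_of_nonneg (hg0 z)]; exact hg2 z
  have hgwint : Integrable (fun z => g z * w z) μ := by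
    refine (integrable_const (4 : ℝ)).mono' (hgmeas.mul hwmeas).aestronglyMeasurable ?_
    filter_upwards with z
    rw [Real.norm_eq_abs, abs_of_nonneg (mul_nonneg (hg0 z) (hw0 z))]
    nlinarith [hg0 z, hg2 z, hw0 z, hw2 z]
  set A := ∫ z, g z * w z ∂μ with hA
  have hA0 : 0 ≤ A := integral_nonneg fun z => mul_nonneg (hg0 z) (hw0 z)
  have key : ∀ t : ℝ, 0 < t → ∫ z, g z ∂μ ≤ 2 * (Cs * t ^ q) + A / t := by
    intro t htpos
    set S := {z | w z ≤ t} with hS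
    have hSm : MeasurableSet S := hwmeas measurableSet_Iic
    have hμS : (μ S).toReal ≤ Cs * t ^ q :=
      ENNReal.toReal_le_of_le_ofReal (mul_nonneg hCs.le (Real.rpow_nonneg htpos.le q)) (hnoise t htpos)
    have hpt : ∀ z, g z ≤ S.indicator (fun _ => (2 : ℝ)) z + g z * w z / t := by
      intro z
      by_cases hz : z ∈ S
      · rw [Set.indicator_of_mem hz]
        have : 0 ≤ g z * w z / t := div_nonneg (mul_nonneg (hg0 z) (hw0 z)) htpos.le
        linarith [hg2 z]
      · rw [Set.indicator_of_notMem hz, zero_add, le_div_iff₀ htpos]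
        exact mul_le_mul_of_nonneg_left (not_le.mp hz).le (hg0 z)
    have hind : Integrable (S.indicator fun _ => (2 : ℝ)) μ :=
      (integrable_const _).indicator hSm
    have hdiv : Integrable (fun z => g z * w z / t) μ := hgwint.div_const t
    have hmono : ∫ z, g z ∂μ ≤ ∫ z, (S.indicator (fun _ => (2 : ℝ)) z + g z * w z / t) ∂μ :=
      integral_mono hgint (hind.add hdiv) hpt
    rw [integral_add hind hdiv, integral_indicator_const _ hSm, integral_div] at hmono
    rw [← hA] at hmono
    have hsm : (μ S).toReal • (2 : ℝ) ≤ 2 * (Cs * t ^ q) := by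
      rw [smul_eq_mul]; nlinarith [hμS]
    rw [measureReal_def] at hmono
    linarith
  rcases hA0.lt_or_eq with hApos | hAzero
  · have htpos : (0 : ℝ) < (A / (2 * q * Cs)) ^ ((1 : ℝ) / (q + 1)) :=
      Real.rpow_pos_of_pos (by positivity) _
    have hk := key _ htpos
    have heq := rpow_opt Cs q A hCs hq hApos
    linarith
  · have hI : ∫ z, g z ∂μ ≤ 0 := by
      by_contra hc
      push_neg at hc
      set ε := (∫ z, g z ∂μ) / 2 with hε
      have hεpos : 0 < ε := by positivity
      have htpos : (0 : ℝ) < (ε / (2 * Cs)) ^ ((1 : ℝ) / q) :=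
        Real.rpow_pos_of_pos (by positivity) _
      have hk := key _ htpos
      have htq : ((ε / (2 * Cs)) ^ ((1 : ℝ) / q)) ^ q = ε / (2 * Cs) := by
        rw [← Real.rpow_mul (by positivity), one_div_mul_cancel hq.ne', Real.rpow_one]
      rw [htq, ← hAzero, zero_div, add_zero] at hk
      have : 2 * (Cs * (ε / (2 * Cs))) = ε := by field_simp
      rw [this] at hk
      linarith
    rw [← hAzero, Real.zero_rpow (by positivity : q / (q + 1) ≠ 0), mul_zero]
    linarith

theorem hinge_variance_bound {α : Type*} [MeasurableSpace α]
    (μ : Measure α) [IsProbabilityMeasure μ]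
    (ηp ηm : α → ℝ) (hηp : Measurable ηp) (hηm : Measurable ηm)
    (hp : ∀ z, ηp z ∈ Set.Icc (0 : ℝ) 1) (hm : ∀ z, ηm z ∈ Set.Icc (0 : ℝ) 1)
    (Cs q : ℝ) (hCs : 0 < Cs) (hq : 0 < q)
    (hnoise : ∀ t > 0, μ {z | |ηp z - ηm z| ≤ t} ≤ ENNReal.ofReal (Cs * t ^ q))
    (f : α → ℝ) (hf : Measurable f) (hfb : ∀ z, f z ∈ Set.Icc (-1 : ℝ) 1) :
    (∫ z, |f z - Real.sign (ηp z - ηm z)| ^ 2 ∂μ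
        ≤ 2 * ∫ z, |f z - Real.sign (ηp z - ηm z)| ∂μ) ∧
    (2 * ∫ z, |f z - Real.sign (ηp z - ηm z)| ∂μ
        ≤ (2 ^ ((q + 2) / (q + 1)) * Cs ^ ((1 : ℝ) / (q + 1)) * q ^ ((1 : ℝ) / (q + 1))
            * (1 + 1 / q))
          * (∫ z, |f z - Real.sign (ηp z - ηm z)| * |ηp z - ηm z| ∂μ) ^ (q / (q + 1))) := by
  have hgmeas : Measurable (fun z => |f z - Real.sign (ηp z - ηm z)|) :=
    (hf.sub (measurable_realSign.comp (hηp.sub hηm))).abs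
  have hg0 : ∀ z, 0 ≤ |f z - Real.sign (ηp z - ηm z)| := fun z => abs_nonneg _
  have hg2 : ∀ z, |f z - Real.sign (ηp z - ηm z)| ≤ 2 := by
    intro z
    have h1 : |f z| ≤ 1 := abs_le.mpr ⟨(hfb z).1, (hfb z).2⟩
    have h2 : |Real.sign (ηp z - ηm z)| ≤ 1 := sign_abs_le _
    calc |f z - Real.sign (ηp z - ηm z)| ≤ |f z| + |Real.sign (ηp z - ηm z)| :=
          abs_sub _ _
      _ ≤ 2 := by linarith
  have hw2 : ∀ z, |ηp z - ηm z| ≤ 2 := by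
    intro z
    have h1 := hp z; have h2 := hm z
    rw [Set.mem_Icc] at h1 h2
    rw [abs_le]; constructor <;> linarith [h1.1, h1.2, h2.1, h2.2]
  constructor
  · -- first inequality
    have hgint : Integrable (fun z => |f z - Real.sign (ηp z - ηm z)|) μ := by
      refine (integrable_const (2 : ℝ)).mono' hgmeas.aestronglyMeasurable ?_
      filter_upwards with z
      rw [Real.norm_eq_abs, abs_of_nonneg (hg0 z)]; exact hg2 z
    have hsqint : Integrable (fun z => |f z - Real.sign (ηp z - ηm z)| ^ 2) μ := by
      refine (integrable_const (4 : ℝ)).mono' (hgmeas.pow_const 2).aestronglyMeasurable ?_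
      filter_upwards with z
      rw [Real.norm_eq_abs, abs_of_nonneg (by positivity)]
      nlinarith [hg0 z, hg2 z]
    rw [← integral_const_mul]
    refine integral_mono hsqint (hgint.const_mul 2) fun z => ?_
    nlinarith [hg0 z, hg2 z]
  · exact hinge_aux μ (fun z => |f z - Real.sign (ηp z - ηm z)|)
      (fun z => |ηp z - ηm z|) hgmeas (hηp.sub hηm).abs hg0 hg2
      (fun z => abs_nonneg _) hw2 Cs q hCs hq hnoise
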